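/- Let S be a po-ring and let R be a directed subring of S (with the induced order). Define D = {d ∈ R⁺ | for all x ∈ S, dx ≥ 0 implies x ≥ 0} and U = {u ∈ R⁺ | there exists v ∈ S⁺ with uv = 1}. Suppose that for every s ∈ S there exist d ∈ D and u ∈ U such that ds ∈ R and su ∈ R. If R is right po-coherent, then S is right po-coherent. -/

import Mathlib

/-- A *po-ring*: a ring equipped with a partial order such that addition is
translation-invariant, multiplication by nonnegative elements (on either side) is monotone,
the ring is directed (every element is a difference of two nonnegative elements),
and `0 ≤ 1`. -/
class PORing (R : Type*) extends Ring R, PartialOrder R where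
  add_le_add_right' : ∀ a b : R, a ≤ b → ∀ c : R, a + c ≤ b + c
  mul_le_mul_of_nonneg_right' : ∀ a b c : R, a ≤ b → 0 ≤ c → a * c ≤ b * c
  mul_le_mul_of_nonneg_left' : ∀ a b c : R, a ≤ b → 0 ≤ c → c * a ≤ c * b
  directed' : ∀ x : R, ∃ y z : R, 0 ≤ y ∧ 0 ≤ z ∧ x = y - z
  zero_le_one' : (0 : R) ≤ 1

/-- A *partially ordered right module* over a po-ring `R`: an additive abelian group with a
right `R`-action `rsmul` (written on the right, so `rsmul a ξ` is `aξ`), with the usual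
right-module axioms, such that addition is translation-invariant and
`0 ≤ a`, `0 ≤ ξ` imply `0 ≤ aξ`. -/
class PORightModule (R : Type*) [PORing R] (A : Type*) [AddCommGroup A] [PartialOrder A] where
  rsmul : A → R → A
  add_rsmul : ∀ (a b : A) (r : R), rsmul (a + b) r = rsmul a r + rsmul b r
  rsmul_add : ∀ (a : A) (r s : R), rsmul a (r + s) = rsmul a r + rsmul a s
  rsmul_mul : ∀ (a : A) (r s : R), rsmul a (r * s) = rsmul (rsmul a r) s
  rsmul_one : ∀ a : A, rsmul a 1 = a
  add_le_add_right' : ∀ a b : A, a ≤ b → ∀ c : A, a + c ≤ b + c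
  rsmul_nonneg : ∀ (a : A) (r : R), 0 ≤ a → 0 ≤ r → 0 ≤ rsmul a r

open PORightModule

/-- A po-ring is a partially ordered right module over itself. -/
instance PORing.toPORightModule (R : Type*) [PORing R] : PORightModule R R where
  rsmul := (· * ·)
  add_rsmul := add_mul
  rsmul_add := mul_add
  rsmul_mul a r s := (mul_assoc a r s).symm
  rsmul_one := mul_one
  add_le_add_right' := PORing.add_le_add_right'
  rsmul_nonneg a r ha hr := by
    have h := PORing.mul_le_mul_of_nonneg_right' 0 a r ha hr
    simpa using h

/-- Products of partially ordered right modules, ordered coordinatewise. -/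
instance Pi.instPORightModule {R : Type*} [PORing R] {ι : Type*} {A : ι → Type*}
    [∀ i, AddCommGroup (A i)] [∀ i, PartialOrder (A i)] [∀ i, PORightModule R (A i)] :
    PORightModule R (∀ i, A i) where
  rsmul x r i := rsmul (x i) r
  add_rsmul a b r := funext fun i => add_rsmul (a i) (b i) r
  rsmul_add a r s := funext fun i => rsmul_add (a i) r s
  rsmul_mul a r s := funext fun i => rsmul_mul (a i) r s
  rsmul_one a := funext fun i => rsmul_one (a i)
  add_le_add_right' a b h c := by
    intro i
    exact PORightModule.add_le_add_right' R (a i) (b i) (h i) (c i)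
  rsmul_nonneg a r ha hr := by
    intro i
    exact PORightModule.rsmul_nonneg (a i) r (ha i) hr

/-- Binary products of partially ordered right modules, ordered coordinatewise. -/
instance Prod.instPORightModule {R : Type*} [PORing R] {A B : Type*}
    [AddCommGroup A] [PartialOrder A] [PORightModule R A]
    [AddCommGroup B] [PartialOrder B] [PORightModule R B] :
    PORightModule R (A × B) where
  rsmul x r := (rsmul x.1 r, rsmul x.2 r)
  add_rsmul a b r := by
    refine Prod.ext ?_ ?_ <;> simp [PORightModule.add_rsmul]
  rsmul_add a r s := by
    refine Prod.ext ?_ ?_ <;> simp [PORightModule.rsmul_add]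
  rsmul_mul a r s := by
    refine Prod.ext ?_ ?_ <;> simp [PORightModule.rsmul_mul]
  rsmul_one a := by
    refine Prod.ext ?_ ?_ <;> simp [PORightModule.rsmul_one]
  add_le_add_right' a b h c := by
    rw [Prod.le_def] at h ⊢
    constructor
    · simpa using PORightModule.add_le_add_right' R a.1 b.1 h.1 c.1
    · simpa using PORightModule.add_le_add_right' R a.2 b.2 h.2 c.2
  rsmul_nonneg a r ha hr := by
    rw [Prod.le_def] at ha ⊢
    constructor
    · simpa using PORightModule.rsmul_nonneg a.1 r (by simpa using ha.1) hr
    · simpa using PORightModule.rsmul_nonneg a.2 r (by simpa using ha.2) hr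

section Defs

variable (R : Type*) [PORing R]

/-- The product `UX = a₁ξ₁ + ⋯ + aₙξₙ` of a row matrix `U = (a₁,…,aₙ)` with entries in `A`
and a column matrix `X = (ξ₁,…,ξₙ)ᵗ` with entries in `R`. -/
def rowMul {A : Type*} [AddCommGroup A] [PartialOrder A] [PORightModule R A]
    {n : ℕ} (U : Fin n → A) (X : Fin n → R) : A :=
  ∑ i, rsmul (U i) (X i)

/-- A subset `S` of a partially ordered right `R`-module is a *finitely generated
`R⁺`-subsemimodule* if it is the set of all `R⁺`-linear combinations of some finite subset. -/
def IsFGConeIn {A : Type*} [AddCommGroup A] [PartialOrder A] [PORightModule R A]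
    (S : Set A) : Prop :=
  ∃ (k : ℕ) (g : Fin k → A),
    S = { a | ∃ Y : Fin k → R, (∀ i, 0 ≤ Y i) ∧ a = rowMul R g Y }

/-- `A` is *finitely related at* the row matrix `U ∈ M_{1,n}(A)` if the solution set of the
mixed system `UX ≥ 0, X ≥ 0` is a finitely generated `R⁺`-subsemimodule of `M_{n,1}(R)`. -/
def FinitelyRelatedAt {A : Type*} [AddCommGroup A] [PartialOrder A] [PORightModule R A]
    {n : ℕ} (U : Fin n → A) : Prop :=
  IsFGConeIn R {X : Fin n → R | 0 ≤ rowMul R U X ∧ ∀ i, 0 ≤ X i}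

/-- `A` is *finitely po-presented at* the row matrix `U ∈ M_{1,n}(A)` if the solution set of
the system `UX ≥ 0` is a finitely generated `R⁺`-subsemimodule of `M_{n,1}(R)`. -/
def FinitelyPoPresentedAt {A : Type*} [AddCommGroup A] [PartialOrder A] [PORightModule R A]
    {n : ℕ} (U : Fin n → A) : Prop :=
  IsFGConeIn R {X : Fin n → R | 0 ≤ rowMul R U X}

/-- A row matrix `U` is *spanning* if its entries generate `A` as a right `R`-module, i.e.
every element of `A` is an `R`-linear combination `UX` of the entries. -/
def SpanningRow {A : Type*} [AddCommGroup A] [PartialOrder A] [PORightModule R A]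
    {n : ℕ} (U : Fin n → A) : Prop :=
  ∀ a : A, ∃ X : Fin n → R, a = rowMul R U X

variable (A : Type*) [AddCommGroup A] [PartialOrder A] [PORightModule R A]

/-- `A` is *finitely po-presented* if it is finitely po-presented at some spanning row
matrix. -/
def FinitelyPoPresented : Prop :=
  ∃ (n : ℕ) (U : Fin n → A), SpanningRow R U ∧ FinitelyPoPresentedAt R U

/-- `A` is *finitely related* if it is a finitely generated right `R`-module and is finitely
related at every spanning row matrix. -/
def FinitelyRelatedMod : Prop :=
  (∃ (n : ℕ) (U : Fin n → A), SpanningRow R U) ∧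
    ∀ (n : ℕ) (U : Fin n → A), SpanningRow R U → FinitelyRelatedAt R U

/-- `A` is *po-coherent* if it is finitely related at every row matrix of elements of `A`. -/
def PoCoherent : Prop :=
  ∀ (n : ℕ) (U : Fin n → A), FinitelyRelatedAt R U

end Defs

/-- A po-ring is *right po-coherent* if it is po-coherent as a partially ordered right module
over itself. -/
def RightPoCoherent (R : Type*) [PORing R] : Prop :=
  PoCoherent R R

/-- A directed subring of a po-ring, with the induced partial order, is itself a po-ring. -/
def Subring.toPORing {S : Type*} [PORing S] (R : Subring S)
    (hdir : ∀ x : R, ∃ y z : R, 0 ≤ (y : S) ∧ 0 ≤ (z : S) ∧ x = y - z) :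
    PORing R where
  __ := (inferInstance : Ring R)
  __ := (inferInstance : PartialOrder R)
  add_le_add_right' a b h c := by
    rw [← Subtype.coe_le_coe] at h ⊢
    push_cast
    exact PORing.add_le_add_right' _ _ h _
  mul_le_mul_of_nonneg_right' a b c h hc := by
    rw [← Subtype.coe_le_coe] at h hc ⊢
    push_cast at hc ⊢
    exact PORing.mul_le_mul_of_nonneg_right' _ _ _ h hc
  mul_le_mul_of_nonneg_left' a b c h hc := by
    rw [← Subtype.coe_le_coe] at h hc ⊢
    push_cast at hc ⊢
    exact PORing.mul_le_mul_of_nonneg_left' _ _ _ h hc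
  directed' x := by
    obtain ⟨y, z, hy, hz, hx⟩ := hdir x
    exact ⟨y, z, by rwa [← Subtype.coe_le_coe, ZeroMemClass.coe_zero],
      by rwa [← Subtype.coe_le_coe, ZeroMemClass.coe_zero], hx⟩
  zero_le_one' := by
    rw [← Subtype.coe_le_coe]
    push_cast
    exact PORing.zero_le_one'

section Aux

variable {S : Type*} [PORing S]

lemma PORing.mul_nonneg' {a b : S} (ha : 0 ≤ a) (hb : 0 ≤ b) : 0 ≤ a * b := by
  have := PORing.mul_le_mul_of_nonneg_right' 0 a b ha hb
  simpa using this

lemma PORing.add_nonneg' {a b : S} (ha : 0 ≤ a) (hb : 0 ≤ b) : 0 ≤ a + b := by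
  have h := PORing.add_le_add_right' 0 a ha b
  rw [zero_add] at h
  exact le_trans hb h

lemma PORing.sum_nonneg' {ι : Type*} (s : Finset ι) (f : ι → S)
    (h : ∀ i ∈ s, 0 ≤ f i) : 0 ≤ ∑ i ∈ s, f i := by
  classical
  induction s using Finset.induction_on with
  | empty => simp
  | insert _ _ hx ih =>
    rw [Finset.sum_insert hx]
    exact PORing.add_nonneg' (h _ (Finset.mem_insert_self _ _))
      (ih fun i hi => h i (Finset.mem_insert_of_mem hi))

lemma rowMul_self {n : ℕ} (U X : Fin n → S) : rowMul S U X = ∑ i, U i * X i := rfl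

lemma rowMul_apply' {n k : ℕ} (g : Fin k → (Fin n → S)) (Z : Fin k → S) (i : Fin n) :
    rowMul S g Z i = ∑ j, g j i * Z j := by
  show (∑ j, rsmul (g j) (Z j)) i = _
  rw [Finset.sum_apply]
  rfl

lemma common_d (R : Subring S)
    (hDU : ∀ s : S, ∃ d ∈ R, ∃ u ∈ R,
      (0 ≤ d ∧ ∀ x : S, 0 ≤ d * x → 0 ≤ x) ∧
      (0 ≤ u ∧ ∃ v : S, 0 ≤ v ∧ u * v = 1) ∧
      d * s ∈ R ∧ s * u ∈ R)
    (L : List S) :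
    ∃ d ∈ R, 0 ≤ d ∧ (∀ x : S, 0 ≤ d * x → 0 ≤ x) ∧ ∀ s ∈ L, d * s ∈ R := by
  induction L with
  | nil => exact ⟨1, R.one_mem, PORing.zero_le_one', fun x hx => by simpa using hx,
      fun s hs => absurd hs List.not_mem_nil⟩
  | cons s L ih =>
    obtain ⟨d, hdR, hd0, hdreg, hdL⟩ := ih
    obtain ⟨d', hd'R, u, -, ⟨hd'0, hd'reg⟩, -, hd's, -⟩ := hDU (d * s)
    refine ⟨d' * d, R.mul_mem hd'R hdR, PORing.mul_nonneg' hd'0 hd0, ?_, ?_⟩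
    · intro x hx
      rw [mul_assoc] at hx
      exact hdreg x (hd'reg _ hx)
    · intro t ht
      rcases List.mem_cons.mp ht with rfl | ht
      · rw [mul_assoc]; exact hd's
      · rw [mul_assoc]; exact R.mul_mem hd'R (hdL t ht)

lemma common_u (R : Subring S)
    (hDU : ∀ s : S, ∃ d ∈ R, ∃ u ∈ R,
      (0 ≤ d ∧ ∀ x : S, 0 ≤ d * x → 0 ≤ x) ∧
      (0 ≤ u ∧ ∃ v : S, 0 ≤ v ∧ u * v = 1) ∧
      d * s ∈ R ∧ s * u ∈ R)
    (L : List S) :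
    ∃ u ∈ R, 0 ≤ u ∧ (∃ v : S, 0 ≤ v ∧ u * v = 1) ∧ ∀ s ∈ L, s * u ∈ R := by
  induction L with
  | nil => exact ⟨1, R.one_mem, PORing.zero_le_one',
      ⟨1, PORing.zero_le_one', one_mul 1⟩, fun s hs => absurd hs List.not_mem_nil⟩
  | cons s L ih =>
    obtain ⟨u, huR, hu0, ⟨v, hv0, huv⟩, huL⟩ := ih
    obtain ⟨d', -, u', hu'R, -, ⟨hu'0, v', hv'0, hu'v'⟩, -, hsu'⟩ := hDU (s * u)
    refine ⟨u * u', R.mul_mem huR hu'R, PORing.mul_nonneg' hu0 hu'0,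
      ⟨v' * v, PORing.mul_nonneg' hv'0 hv0, ?_⟩, ?_⟩
    · rw [mul_assoc, ← mul_assoc u', hu'v', one_mul, huv]
    · intro t ht
      rcases List.mem_cons.mp ht with rfl | ht
      · rw [← mul_assoc]; exact hsu'
      · rw [← mul_assoc]; exact R.mul_mem (huL t ht) hu'R

end Aux

/-- Let `S` be a po-ring and `R` a directed subring of `S` (with the induced
order).  Let `D = {d ∈ R⁺ | ∀ x ∈ S, dx ≥ 0 → x ≥ 0}` and
`U = {u ∈ R⁺ | ∃ v ∈ S⁺, uv = 1}`.  Suppose that for every `s ∈ S` there exist `d ∈ D` and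
`u ∈ U` with `ds ∈ R` and `su ∈ R`.  If `R` is right po-coherent, then `S` is right
po-coherent. -/
theorem rightPoCoherent_of_subring {S : Type*} [PORing S] (R : Subring S)
    (hdir : ∀ x : R, ∃ y z : R, 0 ≤ (y : S) ∧ 0 ≤ (z : S) ∧ x = y - z)
    (hDU : ∀ s : S, ∃ d ∈ R, ∃ u ∈ R,
      (0 ≤ d ∧ ∀ x : S, 0 ≤ d * x → 0 ≤ x) ∧
      (0 ≤ u ∧ ∃ v : S, 0 ≤ v ∧ u * v = 1) ∧
      d * s ∈ R ∧ s * u ∈ R)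
    (hR : @RightPoCoherent R (Subring.toPORing R hdir)) :
    RightPoCoherent S := by
  letI instR : PORing ↥R := Subring.toPORing R hdir
  letI : AddCommGroup ↥R := instR.toRing.toAddCommGroup
  letI : PartialOrder ↥R := instR.toPartialOrder
  replace hR : RightPoCoherent ↥R := hR
  have hle0 : ∀ a : ↥R, 0 ≤ a ↔ (0 : S) ≤ (a : S) := fun _ => Iff.rfl
  have hmulc : ∀ a b : ↥R, ((a * b : ↥R) : S) = (a : S) * (b : S) := fun _ _ => rfl
  have haddc : ∀ a b : ↥R, ((a + b : ↥R) : S) = (a : S) + (b : S) := fun _ _ => rfl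
  have hzeroc : ((0 : ↥R) : S) = 0 := rfl
  have hsumc : ∀ {m : ℕ} (f : Fin m → ↥R), ((∑ i, f i : ↥R) : S) = ∑ i, (f i : S) := by
    intro m
    induction m with
    | zero =>
      intro f
      rw [Finset.univ_eq_empty, Finset.sum_empty, Finset.sum_empty]
      exact hzeroc
    | succ m ih =>
      intro f
      rw [Fin.sum_univ_succ, Fin.sum_univ_succ, haddc, ih]
  intro n U
  obtain ⟨d, hdR, hd0, hdreg, hdU⟩ := common_d R hDU (List.ofFn U)
  have hdU' : ∀ i, d * U i ∈ R := fun i => hdU _ (List.mem_ofFn.mpr ⟨i, rfl⟩)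
  obtain ⟨k, g, hset⟩ := hR n (fun i => (⟨d * U i, hdU' i⟩ : ↥R))
  set V : Fin n → ↥R := fun i => (⟨d * U i, hdU' i⟩ : ↥R) with hVdef
  -- properties of the generators
  have hgj : ∀ j, ((0 : S) ≤ ∑ i, (d * U i) * (g j i : S)) ∧ ∀ i, (0 : S) ≤ (g j i : S) := by
    intro j
    have hmem : g j ∈ {Y : Fin n → ↥R | 0 ≤ rowMul ↥R V Y ∧ ∀ i, 0 ≤ Y i} := by
      refine (Set.ext_iff.mp hset (g j)).mpr ?_
      refine ⟨Pi.single j 1, ?_, ?_⟩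
      · intro j'
        rcases eq_or_ne j' j with rfl | hne
        · rw [Pi.single_eq_same]; exact PORing.zero_le_one'
        · rw [Pi.single_eq_of_ne hne]; exact le_rfl
      · funext i
        rw [rowMul_apply']
        rw [Finset.sum_eq_single j]
        · rw [Pi.single_eq_same]; erw [mul_one]
        · intro b _ hb; rw [Pi.single_eq_of_ne hb]; erw [mul_zero]; rfl
        · intro h; exact absurd (Finset.mem_univ j) h
    obtain ⟨h1, h2⟩ := hmem
    constructor
    · have h1' := (hle0 _).mp h1
      have heq : ((rowMul ↥R V (g j) : ↥R) : S) = ∑ i, (d * U i) * (g j i : S) := by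
        rw [rowMul_self]; erw [hsumc]
        exact Finset.sum_congr rfl fun i _ => hmulc _ _
      rwa [heq] at h1'
    · exact fun i => (hle0 _).mp (h2 i)
  refine ⟨k, fun j i => (g j i : S), ?_⟩
  ext X
  simp only [Set.mem_setOf_eq]
  constructor
  · rintro ⟨hUX, hX⟩
    obtain ⟨u, huR, hu0, ⟨v, hv0, huv⟩, hXu⟩ := common_u R hDU (List.ofFn X)
    have hXu' : ∀ i, X i * u ∈ R := fun i => hXu _ (List.mem_ofFn.mpr ⟨i, rfl⟩)
    have hYmem : (fun i => (⟨X i * u, hXu' i⟩ : ↥R)) ∈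
        {Y : Fin n → ↥R | 0 ≤ rowMul ↥R V Y ∧ ∀ i, 0 ≤ Y i} := by
      refine ⟨?_, ?_⟩
      · refine (hle0 _).mpr ?_
        have heq : ((rowMul ↥R V (fun i => (⟨X i * u, hXu' i⟩ : ↥R)) : ↥R) : S)
            = (∑ i, (d * U i) * X i) * u := by
          rw [rowMul_self]; erw [hsumc]; rw [Finset.sum_mul]
          refine Finset.sum_congr rfl fun i _ => ?_
          erw [hmulc]
          exact (mul_assoc (d * U i) (X i) u).symm
        rw [heq]
        refine PORing.mul_nonneg' ?_ hu0
        have heq2 : ∑ i, (d * U i) * X i = d * ∑ i, U i * X i := by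
          rw [Finset.mul_sum]
          exact Finset.sum_congr rfl fun i _ => mul_assoc _ _ _
        rw [heq2]
        exact PORing.mul_nonneg' hd0 hUX
      · intro i
        exact (hle0 _).mpr (PORing.mul_nonneg' (hX i) hu0)
    replace hYmem := (Set.ext_iff.mp hset _).mp hYmem
    obtain ⟨Z, hZ0, hYZ⟩ := hYmem
    refine ⟨fun j => (Z j : S) * v,
      fun j => PORing.mul_nonneg' ((hle0 _).mp (hZ0 j)) hv0, ?_⟩
    funext i
    rw [rowMul_apply']
    have hYi : X i * u = ∑ j, (g j i : S) * (Z j : S) := by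
      have hci := congrArg (fun a : Fin n → ↥R => ((a i : ↥R) : S)) hYZ
      simp only at hci
      rw [hci, rowMul_apply']; erw [hsumc]
      exact Finset.sum_congr rfl fun j _ => hmulc _ _
    calc X i = (X i * u) * v := by rw [mul_assoc, huv, mul_one]
      _ = (∑ j, (g j i : S) * (Z j : S)) * v := by rw [hYi]
      _ = ∑ j, (g j i : S) * ((Z j : S) * v) := by
          rw [Finset.sum_mul]
          exact Finset.sum_congr rfl fun j _ => mul_assoc _ _ _
  · rintro ⟨W, hW0, rfl⟩
    have hXi : ∀ i, (0 : S) ≤ rowMul S (fun j i => (g j i : S)) W i := by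
      intro i
      rw [rowMul_apply']
      exact PORing.sum_nonneg' _ _ fun j _ => PORing.mul_nonneg' ((hgj j).2 i) (hW0 j)
    refine ⟨?_, hXi⟩
    apply hdreg
    have key : d * rowMul S U (rowMul S (fun j i => (g j i : S)) W)
        = ∑ j, (∑ i, (d * U i) * (g j i : S)) * W j := by
      rw [rowMul_self, Finset.mul_sum]
      have h1 : ∀ i, d * (U i * rowMul S (fun j i => (g j i : S)) W i)
          = ∑ j, ((d * U i) * (g j i : S)) * W j := by
        intro i
        rw [rowMul_apply', ← mul_assoc, Finset.mul_sum]
        exact Finset.sum_congr rfl fun j _ => (mul_assoc _ _ _).symm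
      rw [Finset.sum_congr rfl fun i _ => h1 i, Finset.sum_comm]
      exact Finset.sum_congr rfl fun j _ => (Finset.sum_mul _ _ _).symm
    rw [key]
    exact PORing.sum_nonneg' _ _ fun j _ => PORing.mul_nonneg' ((hgj j).1) (hW0 j)
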